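/- Every graph G on n vertices with m edges and t triangles can be made bipartite by deleting at most m - 4m²/n² + 6t/n edges. -/

import Mathlib

open Finset SimpleGraph

section Aux
variable {V : Type*} [Fintype V] [DecidableEq V]

lemma cnt1 {α β : Type*} [Fintype α] [Fintype β] (P : α → β → Prop)
    [∀ a b, Decidable (P a b)] :
    #(univ.filter fun q : α × β => P q.1 q.2) = ∑ a, #(univ.filter fun b => P a b) := by
  simp only [Finset.card_filter]
  rw [← Finset.univ_product_univ, Finset.sum_product]

lemma cnt2 {α β : Type*} [Fintype α] [Fintype β] (P : α → β → Prop)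
    [∀ a b, Decidable (P a b)] :
    #(univ.filter fun q : α × β => P q.1 q.2) = ∑ b, #(univ.filter fun a => P a b) := by
  simp only [Finset.card_filter]
  rw [← Finset.univ_product_univ, Finset.sum_product_right]

lemma two_mul_card_inter_sym2 (G : SimpleGraph V) [DecidableRel G.Adj] (s : Finset V) :
    2 * #(G.edgeFinset ∩ s.sym2)
      = #(univ.filter fun p : V × V => G.Adj p.1 p.2 ∧ p.1 ∈ s ∧ p.2 ∈ s) := by
  let H : SimpleGraph V :=
    { Adj := fun x y => G.Adj x y ∧ x ∈ s ∧ y ∈ s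
      symm := ⟨fun x y h => ⟨h.1.symm, h.2.2, h.2.1⟩⟩
      loopless := ⟨fun x h => G.loopless.irrefl x h.1⟩ }
  haveI : DecidableRel H.Adj := fun x y => by
    change Decidable (G.Adj x y ∧ x ∈ s ∧ y ∈ s); infer_instance
  have he : H.edgeFinset = G.edgeFinset ∩ s.sym2 := by
    ext e
    induction e with
    | _ x y =>
      simp [mem_edgeFinset, SimpleGraph.mem_edgeSet, Finset.mk_mem_sym2_iff, H]
  rw [← he, H.two_mul_card_edgeFinset]
  congr 1
  ext p
  simp [H]

lemma triangle_count (G : SimpleGraph V) [DecidableRel G.Adj] :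
    #(univ.filter fun q : V × V × V =>
        G.Adj q.2.1 q.2.2 ∧ G.Adj q.1 q.2.1 ∧ G.Adj q.1 q.2.2)
      = 6 * #(G.cliqueFinset 3) := by
  rw [Finset.card_eq_sum_card_fiberwise
    (f := fun q : V × V × V => ({q.1, q.2.1, q.2.2} : Finset V)) (t := G.cliqueFinset 3)
    (fun q hq => by
      simp only [Finset.mem_coe, mem_filter, mem_univ, true_and] at hq
      exact mem_cliqueFinset_iff.2 (is3Clique_triple_iff.2 ⟨hq.2.1, hq.2.2, hq.1⟩))]
  rw [Finset.sum_congr rfl (fun T hT => ?_), Finset.sum_const, smul_eq_mul, mul_comm]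
  -- fiber has cardinality 6
  have h3 : T.card = 3 := (mem_cliqueFinset_iff.1 hT).card_eq
  obtain ⟨a, b, c, hab, hac, hbc, rfl⟩ := Finset.card_eq_three.1 h3
  obtain ⟨hAab, hAac, hAbc⟩ := is3Clique_triple_iff.1 (mem_cliqueFinset_iff.1 hT)
  rw [Finset.filter_filter]
  have hset : (univ.filter fun q : V × V × V =>
      (G.Adj q.2.1 q.2.2 ∧ G.Adj q.1 q.2.1 ∧ G.Adj q.1 q.2.2) ∧
        ({q.1, q.2.1, q.2.2} : Finset V) = {a, b, c})
      = {(a, b, c), (a, c, b), (b, a, c), (b, c, a), (c, a, b), (c, b, a)} := by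
    ext ⟨v, x, y⟩
    simp only [mem_filter, mem_univ, true_and, mem_insert, mem_singleton, Prod.mk.injEq]
    constructor
    · rintro ⟨⟨hxy, hvx, hvy⟩, hS⟩
      have hv : v = a ∨ v = b ∨ v = c := by
        have : v ∈ ({a, b, c} : Finset V) := hS ▸ (by simp)
        simpa using this
      have hx : x = a ∨ x = b ∨ x = c := by
        have : x ∈ ({a, b, c} : Finset V) := hS ▸ (by simp)
        simpa using this
      have hy : y = a ∨ y = b ∨ y = c := by
        have : y ∈ ({a, b, c} : Finset V) := hS ▸ (by simp)
        simpa using this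
      have h1 := hxy.ne
      have h2 := hvx.ne
      have h3 := hvy.ne
      rcases hv with rfl | rfl | rfl <;> rcases hx with rfl | rfl | rfl <;>
        rcases hy with rfl | rfl | rfl <;> simp_all
    · have hba := hAab.symm
      have hca := hAac.symm
      have hcb := hAbc.symm
      rintro (⟨rfl, rfl, rfl⟩ | ⟨rfl, rfl, rfl⟩ | ⟨rfl, rfl, rfl⟩ | ⟨rfl, rfl, rfl⟩ |
        ⟨rfl, rfl, rfl⟩ | ⟨rfl, rfl, rfl⟩) <;>
        refine ⟨⟨?_, ?_, ?_⟩, ?_⟩ <;>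
        first
          | assumption
          | (ext z; simp only [Finset.mem_insert, Finset.mem_singleton]; try tauto)
  rw [hset]
  have nab := Ne.symm hab
  have nac := Ne.symm hac
  have nbc := Ne.symm hbc
  rw [Finset.card_insert_of_notMem (by simp [Prod.ext_iff, hab, hac, hbc, nab, nac, nbc]),
    Finset.card_insert_of_notMem (by simp [Prod.ext_iff, hab, hac, hbc, nab, nac, nbc]),
    Finset.card_insert_of_notMem (by simp [Prod.ext_iff, hab, hac, hbc, nab, nac, nbc]),
    Finset.card_insert_of_notMem (by simp [Prod.ext_iff, hab, hac, hbc, nab, nac, nbc]),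
    Finset.card_insert_of_notMem (by simp [Prod.ext_iff, hab, hac, hbc, nab, nac, nbc]),
    Finset.card_singleton]

lemma perpair (G : SimpleGraph V) [DecidableRel G.Adj] (x y : V) :
    #(univ.filter fun v => G.Adj x y ∧ G.Adj v x ∧ G.Adj v y)
      + #(univ.filter fun v => G.Adj x y ∧ ¬G.Adj v x ∧ ¬G.Adj v y)
      + (if G.Adj x y then G.degree x + G.degree y else 0)
      = 2 * #(univ.filter fun v => G.Adj x y ∧ G.Adj v x ∧ G.Adj v y)
        + (if G.Adj x y then Fintype.card V else 0) := by
  by_cases hadj : G.Adj x y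
  · simp only [hadj, true_and, if_true]
    have e1 : (univ.filter fun v => G.Adj v x ∧ G.Adj v y)
        = G.neighborFinset x ∩ G.neighborFinset y := by
      ext v; simp [mem_neighborFinset, G.adj_comm]
    have e2 : (univ.filter fun v => ¬G.Adj v x ∧ ¬G.Adj v y)
        = (G.neighborFinset x ∪ G.neighborFinset y)ᶜ := by
      ext v; simp [mem_neighborFinset, G.adj_comm, or_iff_not_imp_left]
    rw [e1, e2, Finset.card_compl, ← G.card_neighborFinset_eq_degree,
      ← G.card_neighborFinset_eq_degree]
    have h1 := Finset.card_inter_add_card_union (G.neighborFinset x) (G.neighborFinset y)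
    have h2 : #(G.neighborFinset x ∪ G.neighborFinset y) ≤ Fintype.card V := by
      rw [← Finset.card_univ]; exact Finset.card_le_card (Finset.subset_univ _)
    omega
  · simp [hadj]

lemma deg_part (G : SimpleGraph V) [DecidableRel G.Adj] :
    ∑ p : V × V, (if G.Adj p.1 p.2 then G.degree p.1 + G.degree p.2 else 0)
      = 2 * ∑ v, G.degree v ^ 2 := by
  have key : ∀ x y : V, (if G.Adj x y then G.degree x + G.degree y else 0)
      = (if G.Adj x y then G.degree x else 0) + (if G.Adj x y then G.degree y else 0) := by
    intro x y; split <;> simp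
  rw [← Finset.univ_product_univ, Finset.sum_product]
  simp_rw [key, Finset.sum_add_distrib]
  have hx : ∀ x : V, ∑ y, (if G.Adj x y then G.degree x else 0) = G.degree x ^ 2 := by
    intro x
    rw [← Finset.sum_filter, ← neighborFinset_eq_filter, Finset.sum_const,
      card_neighborFinset_eq_degree, smul_eq_mul, sq]
  have hy : ∀ x : V, ∑ y, (if G.Adj y x then G.degree x else 0) = G.degree x ^ 2 := by
    intro x
    have : ∀ y, G.Adj y x ↔ G.Adj x y := fun y => G.adj_comm y x
    simp_rw [this]
    exact hx x
  rw [Finset.sum_congr rfl fun x _ => hx x]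
  rw [Finset.sum_comm]
  rw [Finset.sum_congr rfl fun y _ => hy y]
  ring

lemma adj_const_part (G : SimpleGraph V) [DecidableRel G.Adj] (c : ℕ) :
    ∑ p : V × V, (if G.Adj p.1 p.2 then c else 0) = 2 * #G.edgeFinset * c := by
  rw [← Finset.sum_filter, Finset.sum_const, smul_eq_mul]
  congr 1
  rw [G.two_mul_card_edgeFinset]

set_option maxHeartbeats 1000000 in
lemma key_identity (G : SimpleGraph V) [DecidableRel G.Adj] :
    (∑ v, (#(G.edgeFinset ∩ (G.neighborFinset v).sym2)
        + #(G.edgeFinset ∩ (G.neighborFinset v)ᶜ.sym2)))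
      + ∑ v, G.degree v ^ 2
    = #G.edgeFinset * Fintype.card V + 6 * #(G.cliqueFinset 3) := by
  have e1 : 2 * (∑ v, #(G.edgeFinset ∩ (G.neighborFinset v).sym2))
      = ∑ v, #(univ.filter fun p : V × V => G.Adj p.1 p.2 ∧ G.Adj v p.1 ∧ G.Adj v p.2) := by
    rw [Finset.mul_sum]
    refine Finset.sum_congr rfl fun v _ => ?_
    rw [two_mul_card_inter_sym2]
    congr 1; ext p; simp [mem_neighborFinset]
  have e2 : 2 * (∑ v, #(G.edgeFinset ∩ (G.neighborFinset v)ᶜ.sym2))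
      = ∑ v, #(univ.filter fun p : V × V => G.Adj p.1 p.2 ∧ ¬G.Adj v p.1 ∧ ¬G.Adj v p.2) := by
    rw [Finset.mul_sum]
    refine Finset.sum_congr rfl fun v _ => ?_
    rw [two_mul_card_inter_sym2]
    congr 1; ext p; simp [mem_neighborFinset]
  have g1a : #(univ.filter fun q : V × V × V =>
        G.Adj q.2.1 q.2.2 ∧ G.Adj q.1 q.2.1 ∧ G.Adj q.1 q.2.2)
      = ∑ v, #(univ.filter fun p : V × V => G.Adj p.1 p.2 ∧ G.Adj v p.1 ∧ G.Adj v p.2) :=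
    cnt1 (fun (v : V) (p : V × V) => G.Adj p.1 p.2 ∧ G.Adj v p.1 ∧ G.Adj v p.2)
  have g1b : #(univ.filter fun q : V × V × V =>
        G.Adj q.2.1 q.2.2 ∧ G.Adj q.1 q.2.1 ∧ G.Adj q.1 q.2.2)
      = ∑ p : V × V, #(univ.filter fun v => G.Adj p.1 p.2 ∧ G.Adj v p.1 ∧ G.Adj v p.2) :=
    cnt2 (fun (v : V) (p : V × V) => G.Adj p.1 p.2 ∧ G.Adj v p.1 ∧ G.Adj v p.2)
  have g2a : #(univ.filter fun q : V × V × V =>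
        G.Adj q.2.1 q.2.2 ∧ ¬G.Adj q.1 q.2.1 ∧ ¬G.Adj q.1 q.2.2)
      = ∑ v, #(univ.filter fun p : V × V => G.Adj p.1 p.2 ∧ ¬G.Adj v p.1 ∧ ¬G.Adj v p.2) :=
    cnt1 (fun (v : V) (p : V × V) => G.Adj p.1 p.2 ∧ ¬G.Adj v p.1 ∧ ¬G.Adj v p.2)
  have g2b : #(univ.filter fun q : V × V × V =>
        G.Adj q.2.1 q.2.2 ∧ ¬G.Adj q.1 q.2.1 ∧ ¬G.Adj q.1 q.2.2)
      = ∑ p : V × V, #(univ.filter fun v => G.Adj p.1 p.2 ∧ ¬G.Adj v p.1 ∧ ¬G.Adj v p.2) :=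
    cnt2 (fun (v : V) (p : V × V) => G.Adj p.1 p.2 ∧ ¬G.Adj v p.1 ∧ ¬G.Adj v p.2)
  have hpp : (∑ p : V × V, #(univ.filter fun v => G.Adj p.1 p.2 ∧ G.Adj v p.1 ∧ G.Adj v p.2))
      + (∑ p : V × V, #(univ.filter fun v => G.Adj p.1 p.2 ∧ ¬G.Adj v p.1 ∧ ¬G.Adj v p.2))
      + (∑ p : V × V, if G.Adj p.1 p.2 then G.degree p.1 + G.degree p.2 else 0)
      = 2 * (∑ p : V × V, #(univ.filter fun v => G.Adj p.1 p.2 ∧ G.Adj v p.1 ∧ G.Adj v p.2))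
        + (∑ p : V × V, if G.Adj p.1 p.2 then Fintype.card V else 0) := by
    rw [← Finset.sum_add_distrib, ← Finset.sum_add_distrib, Finset.mul_sum,
      ← Finset.sum_add_distrib]
    exact Finset.sum_congr rfl fun p _ => perpair G p.1 p.2
  have htri := triangle_count G
  have hdeg := deg_part G
  have hconst := adj_const_part G (Fintype.card V)
  rw [mul_assoc] at hconst
  rw [Finset.sum_add_distrib]
  omega

end Aux

/-- Every graph `G` on `n ≥ 1` vertices with `m` edges and `t` triangles can be made
bipartite by deleting at most `m - 4m²/n² + 6t/n` edges: there is a partition of the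
vertex set into `S` and `Sᶜ` such that the number of edges with both endpoints in the
same part is at most that quantity. -/
theorem make_bipartite {V : Type*} [Fintype V] [DecidableEq V] (G : SimpleGraph V)
    [DecidableRel G.Adj] (n m t : ℕ) (hn : Fintype.card V = n) (hn1 : 1 ≤ n)
    (hm : G.edgeFinset.card = m) (ht : (G.cliqueFinset 3).card = t) :
    ∃ S : Finset V,
      (((G.edgeFinset ∩ S.sym2).card + (G.edgeFinset ∩ Sᶜ.sym2).card : ℕ) : ℝ)
        ≤ m - 4 * m ^ 2 / n ^ 2 + 6 * t / n := by
  haveI hNV : Nonempty V := Fintype.card_pos_iff.mp (by omega)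
  set A : V → ℕ := fun v =>
    #(G.edgeFinset ∩ (G.neighborFinset v).sym2)
      + #(G.edgeFinset ∩ (G.neighborFinset v)ᶜ.sym2) with hAdef
  have key := key_identity G
  rw [hm, ht, hn] at key
  have hnpos : (0 : ℝ) < n := by exact_mod_cast hn1
  have hA : (∑ v, (A v : ℝ)) + ∑ v, (G.degree v : ℝ) ^ 2 = m * n + 6 * t := by
    exact_mod_cast congrArg (Nat.cast : ℕ → ℝ) key
  have hdsum : ∑ v, (G.degree v : ℝ) = 2 * m := by
    have h := G.sum_degrees_eq_twice_card_edges
    rw [hm] at h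
    exact_mod_cast h
  have hcs : (2 * (m : ℝ)) ^ 2 ≤ n * ∑ v, (G.degree v : ℝ) ^ 2 := by
    have h := sq_sum_le_card_mul_sum_sq (s := (univ : Finset V))
      (f := fun v => (G.degree v : ℝ))
    rw [hdsum, Finset.card_univ, hn] at h
    exact_mod_cast h
  have hsum_le : ∑ w, (A w : ℝ) ≤ ((m : ℝ) - 4 * m ^ 2 / n ^ 2 + 6 * t / n) * n := by
    have hexp : ((m : ℝ) - 4 * m ^ 2 / n ^ 2 + 6 * t / n) * n
        = m * n - 4 * m ^ 2 / n + 6 * t := by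
      field_simp
    rw [hexp]
    have hd : 4 * (m : ℝ) ^ 2 / n ≤ ∑ v, (G.degree v : ℝ) ^ 2 := by
      rw [div_le_iff₀ hnpos]
      nlinarith [hcs]
    linarith
  obtain ⟨v, -, hv⟩ := Finset.exists_le_of_sum_le (s := (univ : Finset V))
    Finset.univ_nonempty (f := fun v => (A v : ℝ))
    (g := fun _ => (∑ w, (A w : ℝ)) / n)
    (by
      rw [Finset.sum_const, Finset.card_univ, hn, nsmul_eq_mul]
      rw [mul_div_cancel₀ _ (ne_of_gt hnpos)])
  refine ⟨G.neighborFinset v, ?_⟩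
  calc ((#(G.edgeFinset ∩ (G.neighborFinset v).sym2)
        + #(G.edgeFinset ∩ (G.neighborFinset v)ᶜ.sym2) : ℕ) : ℝ)
      = (A v : ℝ) := by rw [hAdef]
    _ ≤ (∑ w, (A w : ℝ)) / n := hv
    _ ≤ (m : ℝ) - 4 * m ^ 2 / n ^ 2 + 6 * t / n := by
        rw [div_le_iff₀ hnpos]
        exact hsum_le
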